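/- Let m ≥ 1 and let F be a finite set of strings over the alphabet Fin m, each of length at least 2; for each j ≥ 2 let a_j be the number of elements of F of length j. If there exists a real number x > 0 such that ∑_{j≥2} a_j · x^j < m·x − 1, then for every natural number N there exists a string of length N over Fin m that avoids F. -/

import Mathlib

open Finset

namespace MillerAux

variable {m : ℕ}

/-- Strings of length `n` over `Fin m`. -/
def strs (m n : ℕ) : Finset (List (Fin m)) :=
  (Finset.univ : Finset (Fin n → Fin m)).image List.ofFn

lemma mem_strs {n : ℕ} {w : List (Fin m)} : w ∈ strs m n ↔ w.length = n := by
  simp only [strs, mem_image, mem_univ, true_and]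
  constructor
  · rintro ⟨v, rfl⟩; simp
  · rintro rfl
    exact ⟨w.get, List.ofFn_get w⟩

/-- Strings of length `n` avoiding `F`. -/
def A (F : Finset (List (Fin m))) (n : ℕ) : Finset (List (Fin m)) :=
  (strs m n).filter (fun w => ∀ f ∈ F, ¬ f <:+: w)

lemma mem_A {F : Finset (List (Fin m))} {n : ℕ} {w : List (Fin m)} :
    w ∈ A F n ↔ w.length = n ∧ ∀ f ∈ F, ¬ f <:+: w := by
  simp [A, mem_strs]

lemma nil_mem_A {F : Finset (List (Fin m))} (hF : ∀ w ∈ F, 2 ≤ w.length) :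
    ([] : List (Fin m)) ∈ A F 0 := by
  rw [mem_A]
  refine ⟨rfl, fun f hf hinf => ?_⟩
  have h1 := hinf.length_le
  simp only [List.length_nil] at h1
  have := hF f hf
  omega

lemma infix_concat_suffix {α : Type*} {f w : List α} {a : α}
    (h : f <:+: w ++ [a]) (hw : ¬ f <:+: w) : f <:+ w ++ [a] := by
  obtain ⟨s, t, hst⟩ := h
  rcases List.eq_nil_or_concat t with rfl | ⟨t', b, rfl⟩
  · exact ⟨s, by simpa using hst⟩
  · exfalso
    apply hw
    have h2 : (s ++ f ++ t') ++ [b] = w ++ [a] := by simpa using hst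
    obtain ⟨h1, -⟩ := List.append_inj' h2 rfl
    exact ⟨s, t', h1⟩

/-- Key counting recurrence. -/
lemma key (F : Finset (List (Fin m))) (hF : ∀ w ∈ F, 2 ≤ w.length) (n : ℕ) :
    m * (A F n).card ≤ (A F (n+1)).card +
      ∑ f ∈ F.filter (fun f => f.length ≤ n + 1), (A F (n + 1 - f.length)).card := by
  classical
  set E : Finset (List (Fin m)) :=
    (A F n ×ˢ (Finset.univ : Finset (Fin m))).image (fun p => p.1 ++ [p.2]) with hE
  have hEcard : E.card = (A F n).card * m := by
    rw [hE, Finset.card_image_of_injOn, Finset.card_product, Finset.card_univ,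
      Fintype.card_fin]
    intro p _ q _ h
    obtain ⟨h1, h2⟩ := List.append_inj' h rfl
    exact Prod.ext h1 (by simpa using h2)
  have hEmem : ∀ u ∈ E, ∃ w a, u = w ++ [a] ∧ w ∈ A F n := by
    intro u hu
    rw [hE, Finset.mem_image] at hu
    obtain ⟨p, hp, rfl⟩ := hu
    exact ⟨p.1, p.2, rfl, (Finset.mem_product.mp hp).1⟩
  have hElen : ∀ u ∈ E, u.length = n + 1 := by
    intro u hu
    obtain ⟨w, a, rfl, hw⟩ := hEmem u hu
    simp [(mem_A.mp hw).1]
  have hsplit := Finset.card_filter_add_card_filter_not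
    (s := E) (p := fun w => ∀ f ∈ F, ¬ f <:+: w)
  have hgood : (E.filter (fun w => ∀ f ∈ F, ¬ f <:+: w)).card ≤ (A F (n+1)).card := by
    apply Finset.card_le_card
    intro u hu
    rw [Finset.mem_filter] at hu
    exact mem_A.mpr ⟨hElen u hu.1, hu.2⟩
  -- every bad string has a forbidden suffix
  have hbadsuf : ∀ u ∈ E.filter (fun w => ¬ ∀ f ∈ F, ¬ f <:+: w),
      ∃ f, f ∈ F ∧ f <:+ u := by
    intro u hu
    rw [Finset.mem_filter] at hu
    obtain ⟨w, a, rfl, hw⟩ := hEmem u hu.1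
    push_neg at hu
    obtain ⟨f, hf, hinf⟩ := hu.2
    exact ⟨f, hf, infix_concat_suffix hinf ((mem_A.mp hw).2 f hf)⟩
  set pick : List (Fin m) → List (Fin m) := fun u =>
    if h : ∃ f, f ∈ F ∧ f <:+ u then h.choose else [] with hpick
  have hpickspec : ∀ u, (∃ f, f ∈ F ∧ f <:+ u) → pick u ∈ F ∧ pick u <:+ u := by
    intro u h
    rw [hpick]
    simp only [dif_pos h]
    exact h.choose_spec
  have hrecon : ∀ u, (pick u <:+ u) → u.take (u.length - (pick u).length) ++ pick u = u := by
    intro u hsuf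
    generalize hp : pick u = p at hsuf ⊢
    obtain ⟨q, rfl⟩ := hsuf
    have hlq : (q ++ p).length - p.length = q.length := by simp
    rw [hlq, List.take_left]
  have hbad : (E.filter (fun w => ¬ ∀ f ∈ F, ¬ f <:+: w)).card ≤
      ∑ f ∈ F.filter (fun f => f.length ≤ n + 1), (A F (n + 1 - f.length)).card := by
    rw [← Finset.card_sigma]
    apply Finset.card_le_card_of_injOn
      (fun u => ⟨pick u, u.take (u.length - (pick u).length)⟩)
    · -- maps to the sigma set
      intro u hu
      obtain ⟨hpF, hpsuf⟩ := hpickspec u (hbadsuf u hu)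
      rw [Finset.mem_coe, Finset.mem_filter] at hu
      have hulen := hElen u hu.1
      have hlen2 : 2 ≤ (pick u).length := hF _ hpF
      have hlenle : (pick u).length ≤ n + 1 := hulen ▸ hpsuf.length_le
      obtain ⟨w, a, hua, hw⟩ := hEmem u hu.1
      rw [Finset.mem_coe, Finset.mem_sigma]
      constructor
      · exact Finset.mem_filter.mpr ⟨hpF, hlenle⟩
      · rw [mem_A]
        have hwlen : w.length = n := (mem_A.mp hw).1
        have htakelen : (u.take (u.length - (pick u).length)).length
            = n + 1 - (pick u).length := by
          rw [List.length_take, hulen]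
          omega
        refine ⟨htakelen, fun f' hf' hinf => ?_⟩
        -- the take is a prefix of w
        have hpre : u.take (u.length - (pick u).length) <+: w := by
          apply List.prefix_of_prefix_length_le (List.take_prefix _ _)
          · rw [hua]; exact (w.prefix_append [a])
          · rw [htakelen, hwlen]; omega
        exact (mem_A.mp hw).2 f' hf' (hinf.trans hpre.isInfix)
    · -- injective
      intro u₁ hu₁ u₂ hu₂ heq
      simp only [Finset.mem_coe] at hu₁ hu₂
      obtain ⟨-, hs₁⟩ := hpickspec u₁ (hbadsuf u₁ hu₁)
      obtain ⟨-, hs₂⟩ := hpickspec u₂ (hbadsuf u₂ hu₂)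
      obtain ⟨h1, h2⟩ := Sigma.mk.inj_iff.mp heq
      rw [← hrecon u₁ hs₁, ← hrecon u₂ hs₂, eq_of_heq h2, h1]
  calc m * (A F n).card = E.card := by rw [hEcard, Nat.mul_comm]
    _ = (E.filter (fun w => ∀ f ∈ F, ¬ f <:+: w)).card
        + (E.filter (fun w => ¬ ∀ f ∈ F, ¬ f <:+: w)).card := hsplit.symm
    _ ≤ _ := Nat.add_le_add hgood hbad

lemma pos_and_step (F : Finset (List (Fin m))) (hm : 1 ≤ m)
    (hF : ∀ w ∈ F, 2 ≤ w.length) {x : ℝ} (hx : 0 < x)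
    (hS : ∑ f ∈ F, x ^ f.length < m * x - 1) :
    ∀ n, 0 < (A F n).card ∧ ((A F n).card : ℝ) ≤ x * (A F (n+1)).card := by
  intro n
  induction n using Nat.strong_induction_on with
  | _ n ih =>
    have hpos : 0 < (A F n).card := by
      rcases Nat.eq_zero_or_pos n with rfl | hn
      · exact Finset.card_pos.mpr ⟨[], nil_mem_A hF⟩
      · obtain ⟨h1, h2⟩ := ih (n-1) (by omega)
        rw [show n - 1 + 1 = n from by omega] at h2
        by_contra h
        push_neg at h
        rw [Nat.le_zero] at h
        rw [h] at h2
        push_cast at h2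
        have : (0:ℝ) < (A F (n-1)).card := by exact_mod_cast h1
        linarith
    refine ⟨hpos, ?_⟩
    have chain : ∀ d k, k + d = n → ((A F k).card : ℝ) ≤ x ^ d * (A F n).card := by
      intro d
      induction d with
      | zero => intro k hk; rw [show k = n from by omega]; simp
      | succ d hd =>
        intro k hk
        have h1 := (ih k (by omega)).2
        have h2 := hd (k+1) (by omega)
        calc ((A F k).card : ℝ) ≤ x * (A F (k+1)).card := h1
          _ ≤ x * (x ^ d * (A F n).card) := mul_le_mul_of_nonneg_left h2 hx.le
          _ = x ^ (d+1) * (A F n).card := by ring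
    set S : ℝ := ∑ f ∈ F, x ^ f.length with hSdef
    have hcn : (0:ℝ) < ((A F n).card : ℝ) := by exact_mod_cast hpos
    have hkeyR : (m : ℝ) * ((A F n).card : ℝ) ≤ ((A F (n+1)).card : ℝ)
        + ∑ f ∈ F.filter (fun f => f.length ≤ n + 1), ((A F (n + 1 - f.length)).card : ℝ) := by
      have := key F hF n
      exact_mod_cast this
    have hsum1 : ∑ f ∈ F.filter (fun f => f.length ≤ n + 1), ((A F (n + 1 - f.length)).card : ℝ)
        ≤ ∑ f ∈ F.filter (fun f => f.length ≤ n + 1), x ^ (f.length - 1) * ((A F n).card : ℝ) := by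
      apply Finset.sum_le_sum
      intro f hf
      rw [Finset.mem_filter] at hf
      have h2f := hF f hf.1
      exact chain (f.length - 1) (n + 1 - f.length) (by omega)
    have hsum2 : ∑ f ∈ F.filter (fun f => f.length ≤ n + 1), x ^ (f.length - 1) * ((A F n).card : ℝ)
        ≤ ∑ f ∈ F, x ^ (f.length - 1) * ((A F n).card : ℝ) := by
      apply Finset.sum_le_sum_of_subset_of_nonneg (Finset.filter_subset _ _)
      intro f _ _
      positivity
    have hsum3 : ∑ f ∈ F, x ^ (f.length - 1) * ((A F n).card : ℝ) = S / x * ((A F n).card : ℝ) := by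
      rw [hSdef, Finset.sum_div, Finset.sum_mul]
      apply Finset.sum_congr rfl
      intro f hf
      have h2f := hF f hf
      have : x ^ (f.length - 1) = x ^ f.length / x := by
        rw [eq_div_iff hx.ne', ← pow_succ]
        congr 1
        omega
      rw [this]
    have h3 : (m:ℝ) * ((A F n).card : ℝ) - S / x * ((A F n).card : ℝ) ≤ ((A F (n+1)).card : ℝ) := by linarith
    have h4 : x * ((m:ℝ) * ((A F n).card : ℝ) - S / x * ((A F n).card : ℝ)) ≤ x * ((A F (n+1)).card : ℝ) :=
      mul_le_mul_of_nonneg_left h3 hx.le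
    have h5 : x * ((m:ℝ) * ((A F n).card : ℝ) - S / x * ((A F n).card : ℝ)) = (m * x - S) * ((A F n).card : ℝ) := by
      field_simp
    have h6 : ((A F n).card : ℝ) ≤ (m * x - S) * ((A F n).card : ℝ) :=
      le_mul_of_one_le_left hcn.le (by linarith)
    calc ((A F n).card : ℝ) ≤ (m * x - S) * ((A F n).card : ℝ) := h6
      _ = x * ((m:ℝ) * ((A F n).card : ℝ) - S / x * ((A F n).card : ℝ)) := h5.symm
      _ ≤ x * ((A F (n+1)).card : ℝ) := h4

end MillerAux

/-- Miller's criterion: if `F` is a finite set of forbidden strings over `Fin m`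
(each of length ≥ 2) with `a_j` forbidden strings of length `j`, and there is a real
`x > 0` with `∑_{j≥2} a_j·x^j < m·x − 1`, then there exist arbitrarily long strings
avoiding all forbidden substrings. -/
theorem exists_long_string_avoiding (m : ℕ) (hm : 1 ≤ m)
    (F : Finset (List (Fin m))) (hF : ∀ w ∈ F, 2 ≤ w.length)
    (hx : ∃ x : ℝ, 0 < x ∧
      ∑' j : ℕ, ((F.filter (fun w => w.length = j)).card : ℝ) * x ^ j < m * x - 1) :
    ∀ N : ℕ, ∃ w : List (Fin m), w.length = N ∧ ∀ f ∈ F, ¬ f <:+: w := by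
  obtain ⟨x, hx0, hsum⟩ := hx
  -- rewrite the tsum as a sum over F
  have htsum : ∑' j : ℕ, ((F.filter (fun w => w.length = j)).card : ℝ) * x ^ j
      = ∑ f ∈ F, x ^ f.length := by
    set L : ℕ := F.sup List.length with hL
    have hsupp : ∀ j ∉ Finset.range (L + 1),
        ((F.filter (fun w => w.length = j)).card : ℝ) * x ^ j = 0 := by
      intro j hj
      simp only [Finset.mem_range, not_lt] at hj
      have : F.filter (fun w => w.length = j) = ∅ := by
        rw [Finset.filter_eq_empty_iff]
        intro w hw hwj
        have : w.length ≤ L := Finset.le_sup hw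
        omega
      simp [this]
    rw [tsum_eq_sum hsupp]
    have hterm : ∀ j, ((F.filter (fun w => w.length = j)).card : ℝ) * x ^ j
        = ∑ f ∈ F.filter (fun w => w.length = j), x ^ f.length := by
      intro j
      rw [Finset.sum_congr rfl (fun f hf => congrArg (x ^ ·)
        (Finset.mem_filter.mp hf).2), Finset.sum_const, nsmul_eq_mul]
    rw [Finset.sum_congr rfl (fun j _ => hterm j)]
    exact Finset.sum_fiberwise_of_maps_to (fun f hf => Finset.mem_range.mpr
      (Nat.lt_succ_of_le (Finset.le_sup hf))) _
  rw [htsum] at hsum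
  intro N
  have := (MillerAux.pos_and_step F hm hF hx0 hsum N).1
  obtain ⟨w, hw⟩ := Finset.card_pos.mp this
  rw [MillerAux.mem_A] at hw
  exact ⟨w, hw.1, hw.2⟩
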